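/- Let T > 0, let a > b ≥ 0 be real numbers, and let γ ≥ 1 satisfy γ > (a−1)/(a−b). Then there exists a constant C > 0, depending only on T, γ, a, b, such that for all integers n ≥ 2 and r ≥ 1 with r ≤ n/2, the modified Kusuoka partition (t_j) of [0,T] with parameters γ, r and n+1 points satisfies ∑_{j=0}^{n−2} (t_{j+1} − t_j)^a (T − t_{j+1})^{−b} ≤ C n^{−(a−1)} (1 − r/n)^{−(a+b−1)}. -/

import Mathlib

open Real Finset

/-- MVT upper bound from Bernoulli, `1 ≤ p`. -/
lemma aux_rpow_sub_rpow_le {x y p : ℝ} (hy : 0 ≤ y) (hyx : y ≤ x) (hx : 0 < x) (hp : 1 ≤ p) :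
    x ^ p - y ^ p ≤ p * x ^ (p - 1) * (x - y) := by
  have hs : (-1 : ℝ) ≤ y / x - 1 := by
    have : 0 ≤ y / x := div_nonneg hy hx.le
    linarith
  have key : 1 + p * (y / x - 1) ≤ y ^ p / x ^ p := by
    have h := one_add_mul_self_le_rpow_one_add hs hp
    rwa [show (1:ℝ) + (y/x - 1) = y/x by ring, Real.div_rpow hy hx.le] at h
  have hxp : 0 < x ^ p := Real.rpow_pos_of_pos hx p
  have h2 : (1 + p * (y / x - 1)) * x ^ p ≤ y ^ p := by
    calc (1 + p * (y / x - 1)) * x ^ p ≤ (y ^ p / x ^ p) * x ^ p :=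
          mul_le_mul_of_nonneg_right key hxp.le
      _ = y ^ p := div_mul_cancel₀ _ hxp.ne'
  have hx1 : x ^ (p - 1) = x ^ p / x := by rw [Real.rpow_sub hx, Real.rpow_one]
  have e1 : p * x ^ (p - 1) * (x - y) = -(p * (y / x - 1) * x ^ p) := by
    rw [hx1]; field_simp; ring
  nlinarith [h2, e1]

/-- MVT lower bound from Bernoulli, `0 ≤ p ≤ 1`. -/
lemma aux_rpow_sub_rpow_ge {x y p : ℝ} (hy : 0 ≤ y) (hyx : y ≤ x) (hx : 0 < x)
    (hp0 : 0 ≤ p) (hp1 : p ≤ 1) :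
    p * x ^ (p - 1) * (x - y) ≤ x ^ p - y ^ p := by
  have hs : (-1 : ℝ) ≤ y / x - 1 := by
    have : 0 ≤ y / x := div_nonneg hy hx.le
    linarith
  have key : y ^ p / x ^ p ≤ 1 + p * (y / x - 1) := by
    have h := rpow_one_add_le_one_add_mul_self hs hp0 hp1
    rwa [show (1:ℝ) + (y/x - 1) = y/x by ring, Real.div_rpow hy hx.le] at h
  have hxp : 0 < x ^ p := Real.rpow_pos_of_pos hx p
  have h2 : y ^ p ≤ (1 + p * (y / x - 1)) * x ^ p := by
    calc y ^ p = (y ^ p / x ^ p) * x ^ p := (div_mul_cancel₀ _ hxp.ne').symm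
      _ ≤ (1 + p * (y / x - 1)) * x ^ p := mul_le_mul_of_nonneg_right key hxp.le
  have hx1 : x ^ (p - 1) = x ^ p / x := by rw [Real.rpow_sub hx, Real.rpow_one]
  have e1 : p * x ^ (p - 1) * (x - y) = -(p * (y / x - 1) * x ^ p) := by
    rw [hx1]; field_simp; ring
  nlinarith [h2, e1]

lemma aux_sum_rpow_le {e : ℝ} (he : -1 < e) (he0 : e < 0) :
    ∀ N : ℕ, ∑ q ∈ Finset.Icc 1 N, (q : ℝ) ^ e ≤ (N : ℝ) ^ (1 + e) / (1 + e) := by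
  have h1e : 0 < 1 + e := by linarith
  intro N
  induction N with
  | zero => simp [Real.zero_rpow h1e.ne']
  | succ N ih =>
    rw [Finset.sum_Icc_succ_top (by omega)]
    have hNpos : (0:ℝ) < (N:ℝ) + 1 := by positivity
    have hstep := aux_rpow_sub_rpow_ge (x := (N:ℝ)+1) (y := (N:ℝ)) (p := 1+e)
      (by positivity) (by linarith) hNpos (by linarith) (by linarith)
    rw [show ((N:ℝ)+1) - N = 1 by ring, show (1+e) - 1 = e by ring, mul_one] at hstep
    have ih' : (∑ q ∈ Finset.Icc 1 N, (q : ℝ) ^ e) * (1+e) ≤ (N:ℝ)^(1+e) :=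
      (le_div_iff₀ h1e).mp ih
    rw [le_div_iff₀ h1e]
    push_cast
    nlinarith [hstep, ih']

lemma aux_sum_div_rpow_le {e : ℝ} (he : -1 < e) {mR : ℝ} (hm : 1 ≤ mR) (N : ℕ)
    (hN : (N : ℝ) ≤ mR) :
    ∑ q ∈ Finset.Icc 1 N, ((q : ℝ) / mR) ^ e ≤ (1 + 1 / (1 + e)) * mR := by
  have h1e : 0 < 1 + e := by linarith
  have hmpos : 0 < mR := by linarith
  rcases le_or_gt 0 e with h0 | h0
  · calc ∑ q ∈ Finset.Icc 1 N, ((q:ℝ)/mR)^e ≤ ∑ _q ∈ Finset.Icc 1 N, (1:ℝ) := by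
          apply Finset.sum_le_sum; intro q hq
          apply Real.rpow_le_one (by positivity) _ h0
          rw [div_le_one hmpos]
          exact le_trans (by exact_mod_cast (Finset.mem_Icc.mp hq).2) hN
      _ ≤ (N : ℝ) := by simp
      _ ≤ mR := hN
      _ ≤ (1 + 1/(1+e)) * mR := by nlinarith [one_div_nonneg.mpr h1e.le]
  · have key := aux_sum_rpow_le he h0 N
    have hrw : ∑ q ∈ Finset.Icc 1 N, ((q:ℝ)/mR)^e
        = (∑ q ∈ Finset.Icc 1 N, (q:ℝ)^e) * (mR^e)⁻¹ := by
      rw [Finset.sum_mul]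
      refine Finset.sum_congr rfl fun q _ => ?_
      rw [Real.div_rpow (by positivity) hmpos.le, div_eq_mul_inv]
    rw [hrw]
    have hNm : (N:ℝ)^(1+e) ≤ mR^(1+e) := Real.rpow_le_rpow (by positivity) hN h1e.le
    have hinv : 0 < (mR^e)⁻¹ := by positivity
    calc (∑ q ∈ Finset.Icc 1 N, (q:ℝ)^e) * (mR^e)⁻¹
        ≤ ((N:ℝ)^(1+e)/(1+e)) * (mR^e)⁻¹ := mul_le_mul_of_nonneg_right key hinv.le
      _ ≤ (mR^(1+e)/(1+e)) * (mR^e)⁻¹ := by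
          gcongr
      _ = (mR^(1+e) * (mR^e)⁻¹) / (1+e) := by ring
      _ = mR / (1+e) := by
          rw [← Real.rpow_neg hmpos.le, ← Real.rpow_add hmpos,
            show (1+e) + -e = 1 by ring, Real.rpow_one]
      _ = (1/(1+e)) * mR := by ring
      _ ≤ (1 + 1/(1+e)) * mR := mul_le_mul_of_nonneg_right (by linarith) hmpos.le

lemma aux_half_rpow {x p : ℝ} (hx : 1/2 ≤ x) (hx1 : x ≤ 1) : (2:ℝ) ^ (-|p|) ≤ x ^ p := by
  have hx0 : 0 < x := by linarith
  rcases le_or_gt 0 p with h | h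
  · rw [abs_of_nonneg h, Real.rpow_neg (by norm_num), ← Real.inv_rpow (by norm_num)]
    exact Real.rpow_le_rpow (by norm_num) (by linarith) h
  · rw [abs_of_neg h, neg_neg]
    calc (2:ℝ)^p ≤ 1 := Real.rpow_le_one_of_one_le_of_nonpos (by norm_num) h.le
      _ ≤ x ^ p := Real.one_le_rpow_of_pos_of_le_one_of_nonpos hx0 hx1 h.le

set_option maxHeartbeats 2000000 in
/-- For `T > 0`, reals `a > b ≥ 0` and `γ ≥ 1` with `γ > (a-1)/(a-b)`, there is a
constant `C > 0` (depending only on `T, γ, a, b`) such that for all `n ≥ 2`, `r ≥ 1` with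
`r ≤ n/2`, the modified Kusuoka partition — `t 0 = 0`; `t (k+1) = t k + T * n^(-r/(k+1))` for
`k < r`; `t j = (T - t r) * (1 - (1 - (j-r)/(n-r))^γ) + t r` for `r < j ≤ n-1`; `t n = T` —
satisfies `∑_{j=0}^{n-2} (t (j+1) - t j)^a * (T - t (j+1))^(-b)
  ≤ C * n^(-(a-1)) * (1 - r/n)^(-(a+b-1))`. -/
theorem stmt_7 (T a b γ : ℝ) (hT : 0 < T) (hb : 0 ≤ b) (hab : b < a)
    (hγ1 : 1 ≤ γ) (hγ : (a - 1) / (a - b) < γ) :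
    ∃ C > 0, ∀ n r : ℕ, 2 ≤ n → 1 ≤ r → 2 * r ≤ n →
      ∀ t : ℕ → ℝ,
        t 0 = 0 →
        (∀ k, k < r → t (k + 1) = t k + T * (n : ℝ) ^ (-((r : ℝ) / ((k : ℝ) + 1)))) →
        (∀ j, r < j → j ≤ n - 1 →
          t j = (T - t r) * (1 - (1 - ((j : ℝ) - r) / ((n : ℝ) - r)) ^ γ) + t r) →
        t n = T →
        ∑ j ∈ Finset.range (n - 1), (t (j + 1) - t j) ^ a * (T - t (j + 1)) ^ (-b)
          ≤ C * (n : ℝ) ^ (-(a - 1)) * (1 - (r : ℝ) / n) ^ (-(a + b - 1)) := by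
  have hd : 0 < a - b := by linarith
  have hγ0 : 0 < γ := by linarith
  obtain ⟨e, he_def⟩ : ∃ e : ℝ, e = γ * (a - b) - a := ⟨_, rfl⟩
  have he : -1 < e := by
    have h := (div_lt_iff₀ hd).mp hγ
    rw [he_def]; linarith
  have h1e : 0 < 1 + e := by linarith
  have h1e' : 0 < 1 + 1 / (1 + e) := by
    have := one_div_pos.mpr h1e; linarith
  obtain ⟨K, hK_def⟩ : ∃ K : ℝ, K = (2:ℝ) ^ (γ - 1) * γ := ⟨_, rfl⟩
  have hKpos : 0 < K := hK_def ▸ mul_pos (Real.rpow_pos_of_pos two_pos _) hγ0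
  have hT2 : (0:ℝ) < T / 2 := by linarith
  obtain ⟨C1, hC1_def⟩ : ∃ C1 : ℝ, C1 = (2:ℝ) ^ |a + b - 1| * (T ^ a * (T / 2) ^ (-b)) := ⟨_, rfl⟩
  obtain ⟨C2, hC2_def⟩ : ∃ C2 : ℝ, C2 = K ^ a * T ^ (a - b) * (1 + 1 / (1 + e)) := ⟨_, rfl⟩
  have hC1pos : 0 < C1 := hC1_def ▸
    mul_pos (Real.rpow_pos_of_pos two_pos _)
      (mul_pos (Real.rpow_pos_of_pos hT _) (Real.rpow_pos_of_pos hT2 _))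
  have hC2pos : 0 < C2 := hC2_def ▸
    mul_pos (mul_pos (Real.rpow_pos_of_pos hKpos _) (Real.rpow_pos_of_pos hT _)) h1e'
  refine ⟨C1 + C2, by linarith, ?_⟩
  intro n r hn hr hrn t ht0 hrec hform htn
  -- basic cast facts
  have hn2R : (2:ℝ) ≤ n := by exact_mod_cast hn
  have hn0 : (0:ℝ) < n := by linarith
  have hn1 : (1:ℝ) ≤ n := by linarith
  have hr1R : (1:ℝ) ≤ r := by exact_mod_cast hr
  have h2r : 2 * (r:ℝ) ≤ n := by exact_mod_cast hrn
  have hrnN : r < n := by omega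
  have hrnR : (r:ℝ) < n := by exact_mod_cast hrnN
  obtain ⟨x, hx_def⟩ : ∃ x : ℝ, x = 1 - (r:ℝ) / n := ⟨_, rfl⟩
  rw [← hx_def]
  have hxhalf : 1/2 ≤ x := by
    have h : (r:ℝ)/n ≤ 1/2 := by rw [div_le_iff₀ hn0]; linarith
    rw [hx_def]; linarith
  have hx1 : x ≤ 1 := by
    have h : 0 ≤ (r:ℝ)/n := by positivity
    rw [hx_def]; linarith
  have hx0 : 0 < x := lt_of_lt_of_le (by norm_num) hxhalf
  obtain ⟨mR, hmR_def⟩ : ∃ mR : ℝ, mR = (n:ℝ) - r := ⟨_, rfl⟩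
  have hmRx : mR = n * x := by rw [hmR_def, hx_def]; field_simp
  have hmR1 : 1 ≤ mR := by rw [hmR_def]; linarith
  have hmR0 : 0 < mR := lt_of_lt_of_le one_pos hmR1
  -- first segment step bounds
  have hstep1 : ∀ k : ℕ, k < r → 0 < T * (n:ℝ) ^ (-((r:ℝ) / ((k:ℝ) + 1))) ∧
      T * (n:ℝ) ^ (-((r:ℝ) / ((k:ℝ) + 1))) ≤ T / n := by
    intro k hk
    have hk1 : (k:ℝ) + 1 ≤ r := by
      have := Nat.succ_le_of_lt hk; exact_mod_cast this
    have h1 : (1:ℝ) ≤ (r:ℝ) / ((k:ℝ) + 1) := by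
      rw [le_div_iff₀ (by positivity)]; linarith
    refine ⟨by positivity, ?_⟩
    have h2 : (n:ℝ) ^ (-((r:ℝ) / ((k:ℝ) + 1))) ≤ (n:ℝ) ^ (-1 : ℝ) :=
      Real.rpow_le_rpow_of_exponent_le hn1 (by linarith)
    rw [Real.rpow_neg_one] at h2
    calc T * (n:ℝ) ^ (-((r:ℝ) / ((k:ℝ) + 1))) ≤ T * (n:ℝ)⁻¹ :=
          mul_le_mul_of_nonneg_left h2 hT.le
      _ = T / n := by rw [div_eq_mul_inv]
  -- values on the first segment
  have hval : ∀ k : ℕ, k ≤ r → 0 ≤ t k ∧ t k ≤ T * k / n := by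
    intro k
    induction k with
    | zero => intro _; norm_num [ht0]
    | succ k ih =>
      intro hk
      have hk' : k < r := hk
      obtain ⟨h0, h1⟩ := ih (Nat.le_of_lt hk')
      obtain ⟨hp, hu⟩ := hstep1 k hk'
      rw [hrec k hk']
      constructor
      · linarith
      · push_cast
        have hh : T * ((k:ℝ) + 1) / n = T * k / n + T / n := by ring
        linarith
  have hhalf : ∀ k : ℕ, k ≤ r → t k ≤ T / 2 := by
    intro k hk
    obtain ⟨_, h1⟩ := hval k hk
    have hkR : (k:ℝ) ≤ r := by exact_mod_cast hk
    have h2 : T * k / n ≤ T / 2 := by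
      rw [div_le_div_iff₀ hn0 (by norm_num)]
      have hk2 : (k:ℝ) * 2 ≤ n := by linarith
      calc T * k * 2 = T * ((k:ℝ) * 2) := by ring
        _ ≤ T * n := mul_le_mul_of_nonneg_left hk2 hT.le
    linarith
  have htr0 : 0 ≤ t r := (hval r le_rfl).1
  have htrT : t r ≤ T / 2 := hhalf r le_rfl
  obtain ⟨M, hM_def⟩ : ∃ M : ℝ, M = T - t r := ⟨_, rfl⟩
  have hMhalf : T / 2 ≤ M := by rw [hM_def]; linarith
  have hM0 : 0 < M := by linarith
  have hMT : M ≤ T := by rw [hM_def]; linarith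
  -- key formula for the tail
  have hTt : ∀ j : ℕ, r ≤ j → j ≤ n - 1 → T - t j = M * (((n:ℝ) - j) / mR) ^ γ := by
    intro j hrj hjn
    have hmRne : ((n:ℝ) - r) ≠ 0 := by rw [← hmR_def]; exact hmR0.ne'
    rcases eq_or_lt_of_le hrj with heq | hlt
    · rw [← heq]
      have h1 : ((n:ℝ) - r) / mR = 1 := by rw [hmR_def]; exact div_self hmRne
      rw [h1, Real.one_rpow, mul_one]
      exact hM_def.symm
    · have hw : 1 - ((j:ℝ) - r) / ((n:ℝ) - r) = ((n:ℝ) - j) / mR := by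
        rw [hmR_def]; field_simp; ring
      rw [hform j hlt hjn, hw, hM_def]; ring
  have hrn1 : r ≤ n - 1 := by omega
  -- split the sum
  rw [Finset.range_eq_Ico, ← Finset.sum_Ico_consecutive _ (Nat.zero_le r) hrn1]
  have hA0 : (0:ℝ) < (n:ℝ) ^ (-(a - 1)) := Real.rpow_pos_of_pos hn0 _
  have hB0 : (0:ℝ) < x ^ (-(a + b - 1)) := Real.rpow_pos_of_pos hx0 _
  -- Part 1
  have hBB : 1 ≤ (2:ℝ) ^ |a + b - 1| * x ^ (-(a + b - 1)) := by
    have h := aux_half_rpow hxhalf hx1 (p := -(a + b - 1))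
    rw [abs_neg] at h
    have h2 : (0:ℝ) < (2:ℝ) ^ |a + b - 1| := Real.rpow_pos_of_pos two_pos _
    calc (1:ℝ) = (2:ℝ) ^ |a + b - 1| * (2:ℝ) ^ (-|a + b - 1|) := by
          rw [← Real.rpow_add two_pos]; simp
      _ ≤ (2:ℝ) ^ |a + b - 1| * x ^ (-(a + b - 1)) := mul_le_mul_of_nonneg_left h h2.le
  have hS1 : ∑ j ∈ Finset.Ico 0 r, (t (j + 1) - t j) ^ a * (T - t (j + 1)) ^ (-b)
      ≤ C1 * (n:ℝ) ^ (-(a - 1)) * x ^ (-(a + b - 1)) := by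
    have hterm : ∀ j ∈ Finset.Ico 0 r, (t (j + 1) - t j) ^ a * (T - t (j + 1)) ^ (-b)
        ≤ (T / n) ^ a * (T / 2) ^ (-b) := by
      intro j hj
      have hjr : j < r := (Finset.mem_Ico.mp hj).2
      obtain ⟨hp, hu⟩ := hstep1 j hjr
      have hδ : t (j + 1) - t j = T * (n:ℝ) ^ (-((r:ℝ) / ((j:ℝ) + 1))) := by
        rw [hrec j hjr]; ring
      have ht1 : T / 2 ≤ T - t (j + 1) := by
        have := hhalf (j + 1) (Nat.succ_le_of_lt hjr)
        linarith
      have h1 : (t (j + 1) - t j) ^ a ≤ (T / n) ^ a := by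
        rw [hδ]; exact Real.rpow_le_rpow hp.le hu (by linarith)
      have h2 : (T - t (j + 1)) ^ (-b) ≤ (T / 2) ^ (-b) :=
        Real.rpow_le_rpow_of_nonpos hT2 ht1 (by linarith)
      have h3 : (0:ℝ) ≤ (T - t (j + 1)) ^ (-b) := Real.rpow_nonneg (by linarith) _
      have h4 : (0:ℝ) ≤ (T / n) ^ a := Real.rpow_nonneg (by positivity) _
      exact mul_le_mul h1 h2 h3 h4
    have hpow : (n:ℝ) ^ (-(a - 1)) = (n:ℝ) * ((n:ℝ) ^ a)⁻¹ := by
      rw [show -(a - 1) = 1 + -a by ring, Real.rpow_add hn0, Real.rpow_one,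
        Real.rpow_neg hn0.le]
    have hTa0 : (0:ℝ) < T ^ a := Real.rpow_pos_of_pos hT _
    have hD0 : (0:ℝ) < (T / 2) ^ (-b) := Real.rpow_pos_of_pos hT2 _
    have hna0 : (0:ℝ) < ((n:ℝ) ^ a)⁻¹ := by positivity
    calc ∑ j ∈ Finset.Ico 0 r, (t (j + 1) - t j) ^ a * (T - t (j + 1)) ^ (-b)
        ≤ ∑ _j ∈ Finset.Ico 0 r, (T / n) ^ a * (T / 2) ^ (-b) := Finset.sum_le_sum hterm
      _ = (r:ℝ) * ((T / n) ^ a * (T / 2) ^ (-b)) := by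
          rw [Finset.sum_const, Nat.card_Ico]; simp [nsmul_eq_mul]
      _ = T ^ a * (T / 2) ^ (-b) * ((r:ℝ) * ((n:ℝ) ^ a)⁻¹) := by
          rw [Real.div_rpow hT.le hn0.le, div_eq_mul_inv]; ring
      _ ≤ T ^ a * (T / 2) ^ (-b) * ((n:ℝ) * ((n:ℝ) ^ a)⁻¹) := by
          apply mul_le_mul_of_nonneg_left _ (mul_nonneg hTa0.le hD0.le)
          exact mul_le_mul_of_nonneg_right (by linarith) hna0.le
      _ = T ^ a * (T / 2) ^ (-b) * (n:ℝ) ^ (-(a - 1)) * 1 := by rw [hpow]; ring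
      _ ≤ T ^ a * (T / 2) ^ (-b) * (n:ℝ) ^ (-(a - 1))
            * ((2:ℝ) ^ |a + b - 1| * x ^ (-(a + b - 1))) := by
          apply mul_le_mul_of_nonneg_left hBB
          exact mul_nonneg (mul_nonneg hTa0.le hD0.le) hA0.le
      _ = C1 * (n:ℝ) ^ (-(a - 1)) * x ^ (-(a + b - 1)) := by rw [hC1_def]; ring
  -- Part 2
  have hS2 : ∑ j ∈ Finset.Ico r (n - 1), (t (j + 1) - t j) ^ a * (T - t (j + 1)) ^ (-b)
      ≤ C2 * (n:ℝ) ^ (-(a - 1)) * x ^ (-(a + b - 1)) := by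
    have hterm : ∀ j ∈ Finset.Ico r (n - 1), (t (j + 1) - t j) ^ a * (T - t (j + 1)) ^ (-b)
        ≤ K ^ a * M ^ (a - b) * mR ^ (-a) * (((n - 1 - j : ℕ) : ℝ) / mR) ^ e := by
      intro j hj
      obtain ⟨hrj, hjn⟩ := Finset.mem_Ico.mp hj
      have hT1 := hTt j hrj (by omega)
      have hTt2 := hTt (j + 1) (by omega) (by omega)
      obtain ⟨q, hq_def⟩ : ∃ q : ℕ, q = n - 1 - j := ⟨_, rfl⟩
      have hqR : ((q : ℕ) : ℝ) = (n:ℝ) - ↑(j + 1) := by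
        have h : (q : ℕ) + (j + 1) = n := by omega
        rw [eq_sub_iff_add_eq]
        exact_mod_cast h
      obtain ⟨w2, hw2_def⟩ : ∃ w2 : ℝ, w2 = ((n:ℝ) - ↑(j + 1)) / mR := ⟨_, rfl⟩
      obtain ⟨w1, hw1_def⟩ : ∃ w1 : ℝ, w1 = ((n:ℝ) - ↑j) / mR := ⟨_, rfl⟩
      rw [← hw1_def] at hT1
      rw [← hw2_def] at hTt2
      have hq1 : 1 ≤ q := by omega
      have hw2q : w2 = (q : ℝ) / mR := by rw [hw2_def, hqR]
      have hw2lb : 1 / mR ≤ w2 := by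
        rw [hw2q]
        have h1q : (1:ℝ) ≤ (q:ℝ) := by exact_mod_cast hq1
        exact div_le_div_of_nonneg_right h1q hmR0.le
      have hw20 : 0 < w2 := lt_of_lt_of_le (one_div_pos.mpr hmR0) hw2lb
      have hinvpos : 0 < 1 / mR := one_div_pos.mpr hmR0
      have hw1w2 : w1 = w2 + 1 / mR := by
        rw [hw1_def, hw2_def]; push_cast; field_simp; ring
      have hw10 : 0 < w1 := by rw [hw1w2]; linarith
      have hjrR : (r:ℝ) ≤ j := by exact_mod_cast hrj
      have hw11 : w1 ≤ 1 := by
        rw [hw1_def, div_le_one hmR0, hmR_def]; linarith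
      have hw12 : w1 ≤ 2 * w2 := by rw [hw1w2]; linarith
      have hw21le : w2 ≤ w1 := by rw [hw1w2]; linarith
      have hmvt := aux_rpow_sub_rpow_le hw20.le hw21le hw10 hγ1
      have hsub : w1 - w2 = 1 / mR := by rw [hw1w2]; ring
      rw [hsub] at hmvt
      have hpow1 : w1 ^ (γ - 1) ≤ 2 ^ (γ - 1) * w2 ^ (γ - 1) := by
        calc w1 ^ (γ - 1) ≤ (2 * w2) ^ (γ - 1) :=
              Real.rpow_le_rpow hw10.le hw12 (by linarith)
          _ = 2 ^ (γ - 1) * w2 ^ (γ - 1) := Real.mul_rpow (by norm_num) hw20.le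
      have hΔeq : t (j + 1) - t j = M * (w1 ^ γ - w2 ^ γ) := by
        have h : t (j + 1) - t j = (T - t j) - (T - t (j + 1)) := by ring
        rw [h, hT1, hTt2]; ring
      have hmono : w2 ^ γ ≤ w1 ^ γ := Real.rpow_le_rpow hw20.le hw21le (by linarith)
      have hΔ0 : 0 ≤ t (j + 1) - t j := by
        rw [hΔeq]; exact mul_nonneg hM0.le (by linarith)
      obtain ⟨Δb, hΔb_def⟩ : ∃ Δb : ℝ, Δb = K * M * w2 ^ (γ - 1) * mR⁻¹ := ⟨_, rfl⟩
      have hw2g1 : (0:ℝ) < w2 ^ (γ - 1) := Real.rpow_pos_of_pos hw20 _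
      have hΔble : t (j + 1) - t j ≤ Δb := by
        rw [hΔeq, hΔb_def, hK_def]
        have h1 : w1 ^ γ - w2 ^ γ ≤ γ * (2 ^ (γ - 1) * w2 ^ (γ - 1)) * (1 / mR) := by
          calc w1 ^ γ - w2 ^ γ ≤ γ * w1 ^ (γ - 1) * (1 / mR) := hmvt
            _ ≤ γ * (2 ^ (γ - 1) * w2 ^ (γ - 1)) * (1 / mR) :=
                mul_le_mul_of_nonneg_right
                  (mul_le_mul_of_nonneg_left hpow1 hγ0.le) hinvpos.le
        calc M * (w1 ^ γ - w2 ^ γ)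
            ≤ M * (γ * (2 ^ (γ - 1) * w2 ^ (γ - 1)) * (1 / mR)) :=
              mul_le_mul_of_nonneg_left h1 hM0.le
          _ = 2 ^ (γ - 1) * γ * M * w2 ^ (γ - 1) * mR⁻¹ := by
              rw [one_div]; ring
      have h3 : (t (j + 1) - t j) ^ a ≤ Δb ^ a :=
        Real.rpow_le_rpow hΔ0 hΔble (by linarith)
      have hΔba : Δb ^ a = K ^ a * M ^ a * w2 ^ ((γ - 1) * a) * mR ^ (-a) := by
        rw [hΔb_def,
          Real.mul_rpow (mul_nonneg (mul_nonneg hKpos.le hM0.le) hw2g1.le)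
            (inv_nonneg.mpr hmR0.le),
          Real.mul_rpow (mul_nonneg hKpos.le hM0.le) hw2g1.le,
          Real.mul_rpow hKpos.le hM0.le,
          ← Real.rpow_mul hw20.le,
          Real.inv_rpow hmR0.le, ← Real.rpow_neg hmR0.le]
      have h4 : (T - t (j + 1)) ^ (-b) = M ^ (-b) * w2 ^ (-(γ * b)) := by
        rw [hTt2, Real.mul_rpow hM0.le (Real.rpow_pos_of_pos hw20 γ).le,
          ← Real.rpow_mul hw20.le, show γ * (-b) = -(γ * b) by ring]
      have h5 : (0:ℝ) ≤ (T - t (j + 1)) ^ (-b) := by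
        rw [hTt2]
        exact Real.rpow_nonneg (mul_pos hM0 (Real.rpow_pos_of_pos hw20 γ)).le _
      calc (t (j + 1) - t j) ^ a * (T - t (j + 1)) ^ (-b)
          ≤ Δb ^ a * (T - t (j + 1)) ^ (-b) := mul_le_mul_of_nonneg_right h3 h5
        _ = K ^ a * M ^ (a - b) * mR ^ (-a) * w2 ^ e := by
            rw [hΔba, h4]
            have hMab : M ^ (a - b) = M ^ a * M ^ (-b) := by
              rw [show a - b = a + -b by ring, Real.rpow_add hM0]
            have hw2e : w2 ^ ((γ - 1) * a) * w2 ^ (-(γ * b)) = w2 ^ e := by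
              rw [← Real.rpow_add hw20, he_def]; congr 1; ring
            rw [hMab, ← hw2e]; ring
        _ = K ^ a * M ^ (a - b) * mR ^ (-a) * (((n - 1 - j : ℕ) : ℝ) / mR) ^ e := by
            rw [hw2q, hq_def]
    have hreindex : ∑ j ∈ Finset.Ico r (n - 1), (((n - 1 - j : ℕ) : ℝ) / mR) ^ e
        = ∑ q ∈ Finset.Icc 1 (n - 1 - r), ((q : ℝ) / mR) ^ e := by
      apply Finset.sum_nbij' (fun j => n - 1 - j) (fun q => n - 1 - q)
      · intro a ha; simp only [Finset.mem_Ico] at ha; simp only [Finset.mem_Icc]; omega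
      · intro a ha; simp only [Finset.mem_Icc] at ha; simp only [Finset.mem_Ico]; omega
      · intro a ha; simp only [Finset.mem_Ico] at ha; omega
      · intro a ha; simp only [Finset.mem_Icc] at ha; omega
      · intro a ha; rfl
    have hNle : ((n - 1 - r : ℕ) : ℝ) ≤ mR := by
      rw [hmR_def]
      have h1 : (n - 1 - r : ℕ) ≤ n - r := by omega
      have h2 : ((n - 1 - r : ℕ) : ℝ) ≤ ((n - r : ℕ) : ℝ) := by exact_mod_cast h1
      have h3 : ((n - r : ℕ) : ℝ) = (n:ℝ) - r := by
        rw [Nat.cast_sub hrnN.le]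
      linarith
    have hpos1 : (0:ℝ) ≤ K ^ a * M ^ (a - b) * mR ^ (-a) :=
      mul_nonneg (mul_nonneg (Real.rpow_nonneg hKpos.le _) (Real.rpow_nonneg hM0.le _))
        (Real.rpow_nonneg hmR0.le _)
    have hmr1a : mR ^ (-a) * mR = (n:ℝ) ^ (1 - a) * x ^ (1 - a) := by
      have h1 : mR ^ (-a) * mR = mR ^ (1 - a) := by
        rw [show (1:ℝ) - a = -a + 1 by ring, Real.rpow_add hmR0, Real.rpow_one]
      rw [h1, hmRx, Real.mul_rpow hn0.le hx0.le]
    have hxstep : x ^ (1 - a) ≤ x ^ (-(a + b - 1)) :=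
      Real.rpow_le_rpow_of_exponent_ge hx0 hx1 (by linarith)
    have hn1a : (0:ℝ) ≤ (n:ℝ) ^ (1 - a) := Real.rpow_nonneg hn0.le _
    have hKM : (0:ℝ) ≤ K ^ a * M ^ (a - b) * (1 + 1 / (1 + e)) :=
      mul_nonneg (mul_nonneg (Real.rpow_nonneg hKpos.le _) (Real.rpow_nonneg hM0.le _)) h1e'.le
    have hMT' : M ^ (a - b) ≤ T ^ (a - b) := Real.rpow_le_rpow hM0.le hMT hd.le
    have hrest : (0:ℝ) ≤ K ^ a * (1 + 1 / (1 + e)) * ((n:ℝ) ^ (1 - a) * x ^ (-(a + b - 1))) :=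
      mul_nonneg (mul_nonneg (Real.rpow_nonneg hKpos.le _) h1e'.le)
        (mul_nonneg hn1a hB0.le)
    calc ∑ j ∈ Finset.Ico r (n - 1), (t (j + 1) - t j) ^ a * (T - t (j + 1)) ^ (-b)
        ≤ ∑ j ∈ Finset.Ico r (n - 1),
            K ^ a * M ^ (a - b) * mR ^ (-a) * (((n - 1 - j : ℕ) : ℝ) / mR) ^ e :=
          Finset.sum_le_sum hterm
      _ = K ^ a * M ^ (a - b) * mR ^ (-a)
            * ∑ j ∈ Finset.Ico r (n - 1), (((n - 1 - j : ℕ) : ℝ) / mR) ^ e := by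
          rw [Finset.mul_sum]
      _ = K ^ a * M ^ (a - b) * mR ^ (-a)
            * ∑ q ∈ Finset.Icc 1 (n - 1 - r), ((q : ℝ) / mR) ^ e := by rw [hreindex]
      _ ≤ K ^ a * M ^ (a - b) * mR ^ (-a) * ((1 + 1 / (1 + e)) * mR) :=
          mul_le_mul_of_nonneg_left (aux_sum_div_rpow_le he hmR1 _ hNle) hpos1
      _ = K ^ a * M ^ (a - b) * (1 + 1 / (1 + e)) * (mR ^ (-a) * mR) := by ring
      _ = K ^ a * M ^ (a - b) * (1 + 1 / (1 + e)) * ((n:ℝ) ^ (1 - a) * x ^ (1 - a)) := by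
          rw [hmr1a]
      _ ≤ K ^ a * M ^ (a - b) * (1 + 1 / (1 + e)) * ((n:ℝ) ^ (1 - a) * x ^ (-(a + b - 1))) := by
          apply mul_le_mul_of_nonneg_left _ hKM
          exact mul_le_mul_of_nonneg_left hxstep hn1a
      _ = M ^ (a - b) * (K ^ a * (1 + 1 / (1 + e)) * ((n:ℝ) ^ (1 - a) * x ^ (-(a + b - 1)))) := by
          ring
      _ ≤ T ^ (a - b) * (K ^ a * (1 + 1 / (1 + e)) * ((n:ℝ) ^ (1 - a) * x ^ (-(a + b - 1)))) :=
          mul_le_mul_of_nonneg_right hMT' hrest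
      _ = C2 * (n:ℝ) ^ (-(a - 1)) * x ^ (-(a + b - 1)) := by
          rw [hC2_def, show (1:ℝ) - a = -(a - 1) by ring]; ring
  calc ∑ j ∈ Finset.Ico 0 r, (t (j + 1) - t j) ^ a * (T - t (j + 1)) ^ (-b)
        + ∑ j ∈ Finset.Ico r (n - 1), (t (j + 1) - t j) ^ a * (T - t (j + 1)) ^ (-b)
      ≤ C1 * (n:ℝ) ^ (-(a - 1)) * x ^ (-(a + b - 1))
        + C2 * (n:ℝ) ^ (-(a - 1)) * x ^ (-(a + b - 1)) := add_le_add hS1 hS2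
    _ = (C1 + C2) * (n:ℝ) ^ (-(a - 1)) * x ^ (-(a + b - 1)) := by ring
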